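/- Let F be a field of characteristic ≠ 2, V a vector space over F with a nondegenerate quadratic form Q, and φ : V → V an orthogonal linear transformation with Bogolyubov automorphism [φ] of Cl(V,Q). Suppose V' ⊆ V is a φ-invariant nondegenerate subspace of even dimension n with orthonormal basis v₁, …, vₙ (Q(vᵢ) = 1, (vᵢ|vⱼ) = 0 for i ≠ j), and suppose V'^⊥ ⊆ V(1) = ker(φ − Id). Then V(1) has finite codimension in V, and for every u ∈ V'^⊥ one has [φ](ι(v₁)⋯ι(vₙ)ι(u)) = det(φ|_{V/V(1)}) · ι(v₁)⋯ι(vₙ)ι(u), where φ|_{V/V(1)} is the linear map induced by φ on the finite-dimensional quotient V/V(1). -/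

import Mathlib

/-- The eigenspace `V(α) = ker (φ - α·Id)` of a linear operator `φ`. -/
noncomputable def eigSp {F V : Type*} [Field F] [AddCommGroup V] [Module F V]
    (φ : V →ₗ[F] V) (α : F) : Submodule F V :=
  LinearMap.ker (φ - α • LinearMap.id)

/-- The eigenspace `V(α)` is `φ`-invariant, so `φ` induces a linear map on the
quotient `V / V(α)`. -/
noncomputable def quotMap {F V : Type*} [Field F] [AddCommGroup V] [Module F V]
    (φ : V →ₗ[F] V) (α : F) : (V ⧸ eigSp φ α) →ₗ[F] (V ⧸ eigSp φ α) :=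
  Submodule.mapQ _ _ φ (by
    intro v hv
    simp only [eigSp, LinearMap.mem_ker, LinearMap.sub_apply, LinearMap.smul_apply,
      LinearMap.id_coe, id_eq, sub_eq_zero, Submodule.mem_comap] at hv ⊢
    rw [hv, map_smul, hv])

section Aux

variable {F : Type*} [Field F]

/-- Any alternating map in `n = dim` variables is determined by its value on a basis. -/
theorem aux_alt {M N : Type*} [AddCommGroup M] [Module F M] [AddCommGroup N] [Module F N]
    {n : ℕ} (e : Module.Basis (Fin n) F M) (g : M [⋀^Fin n]→ₗ[F] N) (x : Fin n → M) :
    g x = e.det x • g e := by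
  classical
  have h : g = (LinearMap.toSpanSingleton F N (g e)).compAlternatingMap e.det := by
    refine Module.Basis.ext_alternating e fun i hi => ?_
    let σ : Equiv.Perm (Fin n) := Equiv.ofBijective i (Finite.injective_iff_bijective.1 hi)
    have hfe : (fun k => e (i k)) = ⇑e ∘ ⇑σ := rfl
    rw [hfe, g.map_perm, LinearMap.compAlternatingMap_apply, e.det.map_perm, Module.Basis.det_self,
      LinearMap.toSpanSingleton_apply]
    rw [Units.smul_def, Units.smul_def, zsmul_one, Int.cast_smul_eq_zsmul]
  conv_lhs => rw [h]
  rw [LinearMap.compAlternatingMap_apply, LinearMap.toSpanSingleton_apply]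

/-- Determinant of the induced map on the quotient by a pointwise-fixed submodule. -/
theorem det_mapQ_of_fix {M : Type*} [AddCommGroup M] [Module F M] [FiniteDimensional F M]
    (p : Submodule F M) (f : M →ₗ[F] M) (hle : p ≤ p.comap f)
    (hfix : ∀ x ∈ p, f x = x) :
    LinearMap.det (Submodule.mapQ p p f hle) = LinearMap.det f := by
  classical
  obtain ⟨q, hq⟩ := Submodule.exists_isCompl p
  set pe := Submodule.prodEquivOfIsCompl p q hq with hpe
  set d : q →ₗ[F] q :=
    (LinearMap.snd F p q) ∘ₗ (pe.symm : M →ₗ[F] p × q) ∘ₗ f ∘ₗ q.subtype with hd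
  have hA : LinearMap.det (Submodule.mapQ p p f hle) = LinearMap.det d := by
    set eqv := Submodule.quotientEquivOfIsCompl p q hq with heqv
    have hcomm : ∀ z : M ⧸ p, eqv (Submodule.mapQ p p f hle z) = d (eqv z) := by
      intro z
      set y : q := eqv z with hy
      have hz : Submodule.Quotient.mk (y : M) = z :=
        Submodule.mk_quotientEquivOfIsCompl_apply hq z
      rw [← hz]
      have h1 : Submodule.mapQ p p f hle (Submodule.Quotient.mk (y : M)) =
          Submodule.Quotient.mk (f (y : M)) := by rw [Submodule.mapQ_apply]
      set a := pe.symm (f (y : M)) with ha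
      have hfy : f (y : M) = (a.1 : M) + (a.2 : M) := by
        have := pe.apply_symm_apply (f (y : M))
        rw [← this, ← ha, Submodule.coe_prodEquivOfIsCompl']
      have h2 : Submodule.Quotient.mk (f (y : M)) =
          (Submodule.Quotient.mk ((a.2 : M)) : M ⧸ p) := by
        rw [Submodule.Quotient.eq]
        rw [hfy]
        simpa using a.1.2
      have h3 : eqv (Submodule.Quotient.mk ((a.2 : M))) = a.2 :=
        Submodule.quotientEquivOfIsCompl_apply_mk_coe hq a.2
      rw [h1, h2, h3]
      rfl
    have hconj : Submodule.mapQ p p f hle =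
        (eqv.symm : q →ₗ[F] M ⧸ p) ∘ₗ d ∘ₗ (eqv : M ⧸ p →ₗ[F] q) := by
      apply LinearMap.ext; intro z
      apply eqv.injective
      rw [hcomm]
      simp
    rw [hconj]
    exact LinearMap.det_conj d eqv.symm
  have hB : LinearMap.det f = LinearMap.det d := by
    let bp := Module.Free.chooseBasis F p
    let bq := Module.Free.chooseBasis F q
    let b := (bp.prod bq).map pe
    rw [← LinearMap.det_toMatrix b f, ← LinearMap.det_toMatrix bq d]
    have hmat : LinearMap.toMatrix b b f =
        Matrix.fromBlocks 1
          (Matrix.of fun i j => bp.repr ((pe.symm (f ((bq j : M)))).1) i) 0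
          (LinearMap.toMatrix bq bq d) := by
      ext i j
      have hbinl : ∀ jj, b (Sum.inl jj) = ((bp jj : M)) := by
        intro jj
        rw [show b (Sum.inl jj) = pe ((bp.prod bq) (Sum.inl jj)) from Module.Basis.map_apply _ _ _]
        have h1 : ((bp.prod bq) (Sum.inl jj)).1 = bp jj := Module.Basis.prod_apply_inl_fst _ _ _
        have h2 : ((bp.prod bq) (Sum.inl jj)).2 = 0 := Module.Basis.prod_apply_inl_snd _ _ _
        rw [show pe ((bp.prod bq) (Sum.inl jj)) =
            ((((bp.prod bq) (Sum.inl jj)).1 : M) + (((bp.prod bq) (Sum.inl jj)).2 : M)) from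
          Submodule.coe_prodEquivOfIsCompl' _ _ _ _, h1, h2]
        simp
      have hbinr : ∀ jj, b (Sum.inr jj) = ((bq jj : M)) := by
        intro jj
        rw [show b (Sum.inr jj) = pe ((bp.prod bq) (Sum.inr jj)) from Module.Basis.map_apply _ _ _]
        have h1 : ((bp.prod bq) (Sum.inr jj)).1 = 0 := Module.Basis.prod_apply_inr_fst _ _ _
        have h2 : ((bp.prod bq) (Sum.inr jj)).2 = bq jj := Module.Basis.prod_apply_inr_snd _ _ _
        rw [show pe ((bp.prod bq) (Sum.inr jj)) =
            ((((bp.prod bq) (Sum.inr jj)).1 : M) + (((bp.prod bq) (Sum.inr jj)).2 : M)) from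
          Submodule.coe_prodEquivOfIsCompl' _ _ _ _, h1, h2]
        simp
      have hrepr : ∀ (x : M) (k), b.repr x k = (bp.prod bq).repr (pe.symm x) k := by
        intro x k
        rw [show b.repr x = (bp.prod bq).repr (pe.symm x) from by
          rw [show b = (bp.prod bq).map pe from rfl, Module.Basis.map_repr]
          rfl]
      rcases j with jj | jj
      · -- column in p : fixed by f
        have hcol : f (b (Sum.inl jj)) = b (Sum.inl jj) := by
          rw [hbinl]; exact hfix _ (bp jj).2
        rw [LinearMap.toMatrix_apply, hcol, Module.Basis.repr_self]
        rcases i with ii | ii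
        · rw [Matrix.fromBlocks_apply₁₁, Matrix.one_apply]
          simp [Finsupp.single_apply, eq_comm]
        · rw [Matrix.fromBlocks_apply₂₁]
          simp [Finsupp.single_apply]
      · rw [LinearMap.toMatrix_apply, hbinr, hrepr]
        rcases i with ii | ii
        · rw [Module.Basis.prod_repr_inl, Matrix.fromBlocks_apply₁₂]
          rfl
        · rw [Module.Basis.prod_repr_inr, Matrix.fromBlocks_apply₂₂, LinearMap.toMatrix_apply]
          rfl
    rw [hmat, Matrix.det_fromBlocks_zero₂₁, Matrix.det_one, one_mul]
  rw [hA, hB]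

/-- Contraction by a dual vector vanishing on every factor kills a product of generators
of the exterior algebra. -/
theorem aux_contract {V : Type*} [AddCommGroup V] [Module F V] (d : Module.Dual F V) :
    ∀ l : List V, (∀ x ∈ l, d x = 0) →
      CliffordAlgebra.contractLeft (Q := (0 : QuadraticForm F V)) d
        ((l.map (CliffordAlgebra.ι (0 : QuadraticForm F V))).prod) = 0 := by
  intro l
  induction l with
  | nil =>
    intro _
    simpa using CliffordAlgebra.contractLeft_one (0 : QuadraticForm F V) d
  | cons a t ih =>
    intro hd
    rw [List.map_cons, List.prod_cons, CliffordAlgebra.contractLeft_ι_mul,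
      ih (fun x hx => hd x (List.mem_cons_of_mem a hx)), hd a List.mem_cons_self]
    simp

theorem aux_assoc_neg_zero {V : Type*} [AddCommGroup V] [Module F V] [Invertible (2 : F)]
    (Q : QuadraticForm F V) {a b : V} (h : QuadraticMap.polar Q a b = 0) :
    QuadraticMap.associated (R := F) (-Q) a b = 0 := by
  rw [QuadraticMap.associated_apply]
  simp only [QuadraticMap.neg_apply]
  have h' : Q (a + b) - Q a - Q b = 0 := h
  have h2 : -Q (a + b) - -Q a - -Q b = 0 := by
    rw [show -Q (a + b) - -Q a - -Q b = -(Q (a + b) - Q a - Q b) from by ring, h', neg_zero]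
  rw [h2, smul_zero]

/-- The change-of-form map to the exterior algebra sends products of pairwise orthogonal
vectors to the corresponding products of exterior generators. -/
theorem aux_changeForm {V : Type*} [AddCommGroup V] [Module F V] [Invertible (2 : F)]
    (Q : QuadraticForm F V) :
    ∀ l : List V, l.Pairwise (fun a b => QuadraticMap.polar Q a b = 0) →
      CliffordAlgebra.changeForm CliffordAlgebra.changeForm.associated_neg_proof
        ((l.map (CliffordAlgebra.ι Q)).prod)
        = ((l.map (CliffordAlgebra.ι (0 : QuadraticForm F V))).prod) := by
  intro l
  induction l with
  | nil => simp
  | cons a t ih =>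
    intro hp
    rw [List.pairwise_cons] at hp
    rw [List.map_cons, List.prod_cons, CliffordAlgebra.changeForm_ι_mul, ih hp.2,
      aux_contract _ t (fun x hx => aux_assoc_neg_zero Q (hp.1 x hx)), sub_zero,
      List.map_cons, List.prod_cons]

end Aux

/-- Suppose `V' ⊆ V` is a `φ`-invariant nondegenerate subspace of even dimension `n`
with orthonormal basis `v₁, …, vₙ`, and `V'^⊥ ⊆ V(1) = ker (φ - Id)`.  Then `V(1)`
has finite codimension in `V`, and for every `u ∈ V'^⊥`,
`[φ](ι(v₁)⋯ι(vₙ) ι(u)) = det (φ|_{V/V(1)}) · ι(v₁)⋯ι(vₙ) ι(u)`. -/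
theorem bogolyubov_smul_det_on_top_product
    {F V : Type*} [Field F] [AddCommGroup V] [Module F V]
    (hchar : (2 : F) ≠ 0)
    (Q : QuadraticForm F V)
    (hQ : ∀ v : V, (∀ w : V, QuadraticMap.polar Q v w = 0) → v = 0)
    (φ : V →ₗ[F] V) (hφbij : Function.Bijective φ)
    (hφQ : ∀ v : V, Q (φ v) = Q v)
    (θ : CliffordAlgebra Q ≃ₐ[F] CliffordAlgebra Q)
    (hθ : ∀ v : V, θ (CliffordAlgebra.ι Q v) = CliffordAlgebra.ι Q (φ v))
    (V' : Submodule F V) (hV'fd : FiniteDimensional F V')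
    (hV'inv : ∀ u ∈ V', φ u ∈ V')
    (hV'nd : ∀ u ∈ V', (∀ w ∈ V', QuadraticMap.polar Q u w = 0) → u = 0)
    (n : ℕ) (hn : Even n) (v : Fin n → V)
    (hvV' : ∀ i, v i ∈ V')
    (hindep : LinearIndependent F v)
    (hspan : Submodule.span F (Set.range v) = V')
    (hQv : ∀ i, Q (v i) = 1)
    (hortho : ∀ i j, i ≠ j → QuadraticMap.polar Q (v i) (v j) = 0)
    (hperp : ∀ w : V, (∀ u ∈ V', QuadraticMap.polar Q w u = 0) → w ∈ eigSp φ 1) :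
    FiniteDimensional F (V ⧸ eigSp φ 1) ∧
      ∀ u : V, (∀ w ∈ V', QuadraticMap.polar Q u w = 0) →
        θ ((List.ofFn fun i => CliffordAlgebra.ι Q (v i)).prod * CliffordAlgebra.ι Q u) =
          LinearMap.det (quotMap φ 1) •
            ((List.ofFn fun i => CliffordAlgebra.ι Q (v i)).prod *
              CliffordAlgebra.ι Q u) := by
  classical
  letI : Invertible (2 : F) := invertibleOfNonzero hchar
  have hmemW : ∀ x : V, x ∈ eigSp φ 1 ↔ φ x = x := by
    intro x
    simp [eigSp, LinearMap.mem_ker, sub_eq_zero]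
  -- decomposition V = V' + V'^⊥
  set B' : LinearMap.BilinForm F V' := LinearMap.BilinForm.restrict (QuadraticMap.polarBilin Q) V' with hB'
  have hB'apply : ∀ (x y : V'), B' x y = QuadraticMap.polar Q (x : V) (y : V) := by
    intro x y; rfl
  have hB'nd : B'.Nondegenerate := by
    have hsep : ∀ x : V', (∀ y : V', B' x y = 0) → x = 0 := by
      intro x hx
      have := hV'nd x.1 x.2 (fun w hw => by
        have := hx ⟨w, hw⟩
        rwa [hB'apply] at this)
      exact Subtype.ext this
    exact ⟨hsep, fun x hx => hsep x fun y => by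
      rw [hB'apply, QuadraticMap.polar_comm, ← hB'apply]; exact hx y⟩
  have hdecomp : ∀ x : V, ∃ a : V', x - (a : V) ∈ eigSp φ 1 := by
    intro x
    set g : Module.Dual F V' := ((QuadraticMap.polarBilin Q) x) ∘ₗ V'.subtype with hg
    refine ⟨(B'.toDual hB'nd).symm g, hperp _ ?_⟩
    intro w hw
    have h1 : B' ((B'.toDual hB'nd).symm g) ⟨w, hw⟩ = g ⟨w, hw⟩ :=
      LinearMap.BilinForm.apply_toDual_symm_apply (hB := hB'nd) _ _
    rw [hB'apply] at h1
    have h2 : g ⟨w, hw⟩ = QuadraticMap.polar Q x w := rfl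
    rw [QuadraticMap.polar_sub_left, h1, h2, sub_self]
  set π : V' →ₗ[F] V ⧸ eigSp φ 1 := (eigSp φ 1).mkQ ∘ₗ V'.subtype with hπdef
  have hπ : Function.Surjective π := by
    intro z
    obtain ⟨x, rfl⟩ := (eigSp φ 1).mkQ_surjective z
    obtain ⟨a, ha⟩ := hdecomp x
    refine ⟨a, ?_⟩
    rw [hπdef]
    simp only [LinearMap.comp_apply, Submodule.coe_subtype, Submodule.mkQ_apply]
    exact (Submodule.Quotient.eq _).2 (by simpa using (eigSp φ 1).neg_mem ha)
  have hfd : FiniteDimensional F (V ⧸ eigSp φ 1) := Module.Finite.of_surjective π hπ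
  refine ⟨hfd, ?_⟩
  set φ' : V' →ₗ[F] V' := φ.restrict hV'inv with hφ'def
  have hφ'coe : ∀ x : V', ((φ' x : V)) = φ (x : V) := fun x => rfl
  -- determinant identification
  have hquotMap : ∀ x : V, quotMap φ 1 (Submodule.Quotient.mk x) = Submodule.Quotient.mk (φ x) := by
    intro x
    simp [quotMap, Submodule.mapQ_apply]
  have hdet : LinearMap.det (quotMap φ 1) = LinearMap.det φ' := by
    set K := LinearMap.ker π with hK
    have hπφ : ∀ x : V', π (φ' x) = quotMap φ 1 (π x) := by
      intro x
      rw [hπdef]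
      simp only [LinearMap.comp_apply, Submodule.coe_subtype, Submodule.mkQ_apply]
      rw [hφ'coe, hquotMap]
    have hKle : K ≤ K.comap φ' := by
      intro x hx
      rw [hK, LinearMap.mem_ker] at hx
      rw [Submodule.mem_comap, hK, LinearMap.mem_ker, hπφ, hx, map_zero]
    have hKfix : ∀ x ∈ K, φ' x = x := by
      intro x hx
      rw [hK, LinearMap.mem_ker, hπdef] at hx
      simp only [LinearMap.comp_apply, Submodule.coe_subtype, Submodule.mkQ_apply,
        Submodule.Quotient.mk_eq_zero] at hx
      exact Subtype.ext ((hmemW _).1 hx)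
    set ψ := Submodule.mapQ K K φ' hKle with hψ
    set eqv := π.quotKerEquivOfSurjective hπ with heqvdef
    have heqv : ∀ m : V', eqv (Submodule.Quotient.mk m) = π m := by
      intro m
      rw [heqvdef]
      simp [LinearMap.quotKerEquivOfSurjective, LinearMap.quotKerEquivRange_apply_mk]
    have hconj : quotMap φ 1 =
        (eqv : (V' ⧸ K) →ₗ[F] V ⧸ eigSp φ 1) ∘ₗ ψ ∘ₗ
          (eqv.symm : (V ⧸ eigSp φ 1) →ₗ[F] V' ⧸ K) := by
      apply LinearMap.ext; intro z
      obtain ⟨y, rfl⟩ := eqv.surjective z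
      obtain ⟨m, rfl⟩ := Submodule.Quotient.mk_surjective _ y
      simp only [LinearMap.comp_apply, LinearEquiv.coe_coe, LinearEquiv.symm_apply_apply]
      rw [heqv, hψ, Submodule.mapQ_apply, heqv, hπφ]
    rw [hconj, LinearMap.det_conj, hψ, det_mapQ_of_fix K φ' hKle hKfix]
  -- the basis of V'
  set e : Module.Basis (Fin n) F V' :=
    (Module.Basis.span hindep).map (LinearEquiv.ofEq _ _ hspan) with he_def
  have he : ∀ i, ((e i : V)) = v i := by
    intro i
    rw [he_def]
    simp [Module.Basis.span_apply]
  -- Clifford algebra: the key identity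
  set P : CliffordAlgebra Q := (List.ofFn fun i => CliffordAlgebra.ι Q (v i)).prod with hP
  have hpair1 : (List.ofFn v).Pairwise (fun a b => QuadraticMap.polar Q a b = 0) :=
    List.pairwise_ofFn.2 fun i j h => hortho i j h.ne
  have hpolarφ : ∀ a b : V, QuadraticMap.polar Q (φ a) (φ b) = QuadraticMap.polar Q a b := by
    intro a b
    simp only [QuadraticMap.polar, ← map_add, hφQ]
  have hpair2 : (List.ofFn fun i => φ (v i)).Pairwise
      (fun a b => QuadraticMap.polar Q a b = 0) :=
    List.pairwise_ofFn.2 fun i j h => by rw [hpolarφ]; exact hortho i j h.ne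
  have hE : ∀ x : CliffordAlgebra Q, CliffordAlgebra.equivExterior Q x =
      CliffordAlgebra.changeForm CliffordAlgebra.changeForm.associated_neg_proof x :=
    fun _ => rfl
  have hone : CliffordAlgebra.equivExterior Q P = ExteriorAlgebra.ιMulti F n v := by
    rw [hE, hP, show (List.ofFn fun i => CliffordAlgebra.ι Q (v i))
        = (List.ofFn v).map (CliffordAlgebra.ι Q) from by rw [List.map_ofFn]; rfl,
      aux_changeForm Q _ hpair1, ExteriorAlgebra.ιMulti_apply, List.map_ofFn]
    rfl
  have htwo : CliffordAlgebra.equivExterior Q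
      ((List.ofFn fun i => CliffordAlgebra.ι Q (φ (v i))).prod)
      = ExteriorAlgebra.ιMulti F n (fun i => φ (v i)) := by
    rw [hE, show (List.ofFn fun i => CliffordAlgebra.ι Q (φ (v i)))
        = (List.ofFn fun i => φ (v i)).map (CliffordAlgebra.ι Q) from by
          rw [List.map_ofFn]; rfl,
      aux_changeForm Q _ hpair2, ExteriorAlgebra.ιMulti_apply, List.map_ofFn]
    rfl
  have hθP : θ P = (List.ofFn fun i => CliffordAlgebra.ι Q (φ (v i))).prod := by
    rw [hP, map_list_prod, List.map_ofFn]
    exact congrArg List.prod (congrArg List.ofFn (funext fun i => hθ (v i)))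
  set g : (V' : Type _) [⋀^Fin n]→ₗ[F] ExteriorAlgebra F V :=
    (ExteriorAlgebra.ιMulti F n (M := V)).compLinearMap V'.subtype with hgdef
  have hge : g ⇑e = ExteriorAlgebra.ιMulti F n v := by
    rw [hgdef, AlternatingMap.compLinearMap_apply]
    exact congrArg _ (funext fun i => he i)
  have hgφ : g (fun i => φ' (e i)) = ExteriorAlgebra.ιMulti F n (fun i => φ (v i)) := by
    rw [hgdef, AlternatingMap.compLinearMap_apply]
    refine congrArg _ (funext fun i => ?_)
    show ((φ' (e i) : V)) = φ (v i)
    rw [hφ'coe, he]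
  have hdet' : e.det (fun i => φ' (e i)) = LinearMap.det φ' := by
    rw [show (fun i => φ' (e i)) = ⇑φ' ∘ ⇑e from rfl, Module.Basis.det_comp, Module.Basis.det_self, mul_one]
  have key : θ P = LinearMap.det φ' • P := by
    apply (CliffordAlgebra.equivExterior Q).injective
    rw [map_smul, hone, hθP, htwo, ← hgφ, aux_alt e g, hdet', hge]
  intro u hu
  have huW : φ u = u := (hmemW u).1 (hperp u hu)
  rw [map_mul, key, hθ u, huW, smul_mul_assoc, hdet]
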